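/- Let Â, A⋆ ∈ ℝ^{d×d}, B̂, B⋆ ∈ ℝ^{d×m}, L ∈ ℝ^{m×d}, and let P ∈ ℝ^{d×d} be symmetric positive definite and α > 0. Set F̂ = Â + B̂ L and F⋆ = A⋆ + B⋆ L, and let η_A ≥ ‖Â − A⋆‖, η_B ≥ ‖B̂ − B⋆‖, and η_cl = η_A + ‖L‖ η_B. Suppose F̂ᵀ P F̂ − P ⪯ −α I_d and 2 ‖P‖ ‖F̂‖ η_cl + ‖P‖ η_cl² ≤ α/2. Then F⋆ᵀ P F⋆ − P ⪯ −(α/2) I_d. -/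

import Mathlib

open Matrix
open scoped Matrix.Norms.L2Operator

section aux

variable {d : ℕ}

/-- Euclidean norm of a plain vector. -/
noncomputable def eNorm (v : Fin d → ℝ) : ℝ :=
  ‖(EuclideanSpace.equiv (Fin d) ℝ).symm v‖

lemma eNorm_nonneg (v : Fin d → ℝ) : 0 ≤ eNorm v := norm_nonneg _

lemma dot_le_eNorm (u v : Fin d → ℝ) : u ⬝ᵥ v ≤ eNorm u * eNorm v := by
  have h := real_inner_le_norm ((EuclideanSpace.equiv (Fin d) ℝ).symm u)
      ((EuclideanSpace.equiv (Fin d) ℝ).symm v)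
  have h2 : (inner ℝ ((EuclideanSpace.equiv (Fin d) ℝ).symm u)
      ((EuclideanSpace.equiv (Fin d) ℝ).symm v) : ℝ) = u ⬝ᵥ v := by
    simp [PiLp.inner_apply, dotProduct, RCLike.inner_apply, mul_comm]
  rw [h2] at h
  exact h

lemma dot_self_eq (v : Fin d → ℝ) : v ⬝ᵥ v = eNorm v ^ 2 := by
  have h := real_inner_self_eq_norm_sq ((EuclideanSpace.equiv (Fin d) ℝ).symm v)
  have h2 : (inner ℝ ((EuclideanSpace.equiv (Fin d) ℝ).symm v)
      ((EuclideanSpace.equiv (Fin d) ℝ).symm v) : ℝ) = v ⬝ᵥ v := by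
    rw [PiLp.inner_apply]; simp [dotProduct, RCLike.inner_apply, mul_comm, sq]
  rw [h2] at h
  exact h

lemma eNorm_mulVec_le (A : Matrix (Fin d) (Fin d) ℝ) (v : Fin d → ℝ) :
    eNorm (A *ᵥ v) ≤ ‖A‖ * eNorm v :=
  Matrix.l2_opNorm_mulVec A ((EuclideanSpace.equiv (Fin d) ℝ).symm v)

end aux

/-- lifted feedback robustness: if `F̂ᵀ P F̂ - P ⪯ -α I` and
`2‖P‖‖F̂‖η_cl + ‖P‖η_cl² ≤ α/2` with `η_cl = η_A + ‖L‖η_B`, then the true closed loop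
satisfies `F⋆ᵀ P F⋆ - P ⪯ -(α/2) I`. -/
theorem lifted_feedback_robustness
    (d m : ℕ)
    (Ahat Astar : Matrix (Fin d) (Fin d) ℝ)
    (Bhat Bstar : Matrix (Fin d) (Fin m) ℝ)
    (L : Matrix (Fin m) (Fin d) ℝ)
    (P : Matrix (Fin d) (Fin d) ℝ) (hP : P.PosDef)
    (α : ℝ) (hα : 0 < α)
    (Fhat Fstar : Matrix (Fin d) (Fin d) ℝ)
    (hFhat : Fhat = Ahat + Bhat * L) (hFstar : Fstar = Astar + Bstar * L)
    (ηA ηB ηcl : ℝ)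
    (hηA : ‖Ahat - Astar‖ ≤ ηA) (hηB : ‖Bhat - Bstar‖ ≤ ηB)
    (hηcl : ηcl = ηA + ‖L‖ * ηB)
    (hlyap : ((-α) • (1 : Matrix (Fin d) (Fin d) ℝ) -
        (Fhatᵀ * P * Fhat - P)).PosSemidef)
    (hmargin : 2 * ‖P‖ * ‖Fhat‖ * ηcl + ‖P‖ * ηcl ^ 2 ≤ α / 2) :
    ((-(α / 2)) • (1 : Matrix (Fin d) (Fin d) ℝ) -
        (Fstarᵀ * P * Fstar - P)).PosSemidef := by
  -- error matrix
  set E : Matrix (Fin d) (Fin d) ℝ := Fstar - Fhat with hE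
  have hPsymm : Pᵀ = P := hP.isHermitian
  have hEnorm : ‖E‖ ≤ ηcl := by
    have h1 : E = (Astar - Ahat) + (Bstar - Bhat) * L := by
      rw [hE, hFstar, hFhat, Matrix.sub_mul]; abel
    calc ‖E‖ ≤ ‖Astar - Ahat‖ + ‖(Bstar - Bhat) * L‖ := by rw [h1]; exact norm_add_le _ _
      _ ≤ ηA + ‖L‖ * ηB := by
          have h2 : ‖(Bstar - Bhat) * L‖ ≤ ‖Bstar - Bhat‖ * ‖L‖ := Matrix.l2_opNorm_mul _ _
          have h3 : ‖Astar - Ahat‖ = ‖Ahat - Astar‖ := norm_sub_rev _ _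
          have h4 : ‖Bstar - Bhat‖ = ‖Bhat - Bstar‖ := norm_sub_rev _ _
          have hLnn : (0:ℝ) ≤ ‖L‖ := norm_nonneg _
          nlinarith [norm_nonneg (Bstar - Bhat)]
      _ = ηcl := hηcl.symm
  have hηcl_nn : 0 ≤ ηcl := le_trans (norm_nonneg E) hEnorm
  refine Matrix.PosSemidef.of_dotProduct_mulVec_nonneg ?_ ?_
  · -- Hermitian
    have h1 : (Fstarᵀ * P * Fstar).IsHermitian := by
      have := Matrix.isHermitian_conjTranspose_mul_mul Fstar hP.isHermitian
      simpa [Matrix.conjTranspose_eq_transpose_of_trivial] using this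
    have h2 : ((-(α / 2)) • (1 : Matrix (Fin d) (Fin d) ℝ)).IsHermitian := by
      simp [Matrix.IsHermitian]
    exact h2.sub (h1.sub hP.isHermitian)
  · intro x
    have hstar : star x = x := by simp
    rw [hstar]
    -- quadratic form identities
    have qform : ∀ (F : Matrix (Fin d) (Fin d) ℝ) (v : Fin d → ℝ),
        v ⬝ᵥ (Fᵀ * P * F) *ᵥ v = (F *ᵥ v) ⬝ᵥ (P *ᵥ (F *ᵥ v)) := by
      intro F v
      rw [← Matrix.mulVec_mulVec, ← Matrix.mulVec_mulVec, Matrix.dotProduct_mulVec,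
        Matrix.vecMul_transpose]
    have hsP : ∀ u v : Fin d → ℝ, u ⬝ᵥ (P *ᵥ v) = v ⬝ᵥ (P *ᵥ u) := by
      intro u v
      rw [Matrix.dotProduct_mulVec, ← Matrix.mulVec_transpose, hPsymm,
        dotProduct_comm]
    set y : Fin d → ℝ := Fhat *ᵥ x with hy
    set e : Fin d → ℝ := E *ᵥ x with he
    have hz : Fstar *ᵥ x = y + e := by
      rw [hy, he, hE, Matrix.sub_mulVec]; ring_nf
    -- hypothesis quadratic form
    have hl := hlyap.dotProduct_mulVec_nonneg x
    rw [hstar] at hl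
    have hl' : y ⬝ᵥ (P *ᵥ y) - x ⬝ᵥ (P *ᵥ x) ≤ -α * (x ⬝ᵥ x) := by
      have expand : x ⬝ᵥ ((-α) • (1 : Matrix (Fin d) (Fin d) ℝ) -
          (Fhatᵀ * P * Fhat - P)) *ᵥ x
          = -α * (x ⬝ᵥ x) - (x ⬝ᵥ (Fhatᵀ * P * Fhat) *ᵥ x - x ⬝ᵥ (P *ᵥ x)) := by
        rw [Matrix.sub_mulVec, Matrix.sub_mulVec, dotProduct_sub,
          dotProduct_sub, Matrix.smul_mulVec, Matrix.one_mulVec,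
          dotProduct_smul]
        simp [smul_eq_mul]
      rw [expand, qform Fhat x, ← hy] at hl
      linarith
    -- main expansion
    have hgoal_expand : x ⬝ᵥ ((-(α / 2)) • (1 : Matrix (Fin d) (Fin d) ℝ) -
        (Fstarᵀ * P * Fstar - P)) *ᵥ x
        = -(α/2) * (x ⬝ᵥ x) - ((y + e) ⬝ᵥ (P *ᵥ (y + e)) - x ⬝ᵥ (P *ᵥ x)) := by
      rw [Matrix.sub_mulVec, Matrix.sub_mulVec, dotProduct_sub,
        dotProduct_sub, Matrix.smul_mulVec, Matrix.one_mulVec,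
        dotProduct_smul, qform Fstar x, hz]
      simp [smul_eq_mul]
    rw [hgoal_expand]
    have hcross : (y + e) ⬝ᵥ (P *ᵥ (y + e))
        = y ⬝ᵥ (P *ᵥ y) + 2 * (y ⬝ᵥ (P *ᵥ e)) + e ⬝ᵥ (P *ᵥ e) := by
      simp only [Matrix.mulVec_add, dotProduct_add, add_dotProduct]
      rw [hsP e y]; ring
    -- norm bounds
    have hnx := eNorm_nonneg x
    have hny : eNorm y ≤ ‖Fhat‖ * eNorm x := eNorm_mulVec_le Fhat x
    have hne : eNorm e ≤ ηcl * eNorm x := by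
      calc eNorm e ≤ ‖E‖ * eNorm x := eNorm_mulVec_le E x
        _ ≤ ηcl * eNorm x := by nlinarith
    have hPe : eNorm (P *ᵥ e) ≤ ‖P‖ * (ηcl * eNorm x) := by
      calc eNorm (P *ᵥ e) ≤ ‖P‖ * eNorm e := eNorm_mulVec_le P e
        _ ≤ ‖P‖ * (ηcl * eNorm x) :=
          mul_le_mul_of_nonneg_left hne (norm_nonneg P)
    have h1 : y ⬝ᵥ (P *ᵥ e) ≤ (‖Fhat‖ * eNorm x) * (‖P‖ * (ηcl * eNorm x)) := by
      calc y ⬝ᵥ (P *ᵥ e) ≤ eNorm y * eNorm (P *ᵥ e) := dot_le_eNorm _ _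
        _ ≤ (‖Fhat‖ * eNorm x) * (‖P‖ * (ηcl * eNorm x)) := by
            have hy0 := eNorm_nonneg y
            have hpe0 := eNorm_nonneg (P *ᵥ e)
            nlinarith [norm_nonneg Fhat, norm_nonneg P, mul_nonneg (norm_nonneg P) (mul_nonneg hηcl_nn hnx)]
    have h2 : e ⬝ᵥ (P *ᵥ e) ≤ (ηcl * eNorm x) * (‖P‖ * (ηcl * eNorm x)) := by
      calc e ⬝ᵥ (P *ᵥ e) ≤ eNorm e * eNorm (P *ᵥ e) := dot_le_eNorm _ _
        _ ≤ (ηcl * eNorm x) * (‖P‖ * (ηcl * eNorm x)) := by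
            have he0 := eNorm_nonneg e
            have hpe0 := eNorm_nonneg (P *ᵥ e)
            nlinarith [mul_nonneg (norm_nonneg P) (mul_nonneg hηcl_nn hnx)]
    have hxx : x ⬝ᵥ x = eNorm x ^ 2 := dot_self_eq x
    rw [hcross]
    have hmargin' : (2 * ‖P‖ * ‖Fhat‖ * ηcl + ‖P‖ * ηcl ^ 2) * eNorm x ^ 2
        ≤ (α / 2) * eNorm x ^ 2 := by
      nlinarith
    nlinarith [sq_nonneg (eNorm x)]
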